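/- For each integer d ≥ 3, define g_d(z) = (2−d)/d − log(d z²/2) + ((d−1)/2) z² − 2/(d² z²) and z_d(x) = (x − √(x² − 4(d−1))) / ((d−1)√(2d)) for x ≥ 2√(d−1). If x_d ≥ 2√(d−1) is any sequence satisfying g_d(z_d(x_d)) = 0 for each d, then the quantity μ_d = x_d √(2/d) satisfies μ_d² = 2 log d + 2 log log d + 2 + o(1) as d → ∞; that is, μ_d² − (2 log d + 2 log log d + 2) → 0. -/

import Mathlib

open Filter

noncomputable section
set_option maxHeartbeats 1600000

/-- `g_d(z) = (2-d)/d - log(d z²/2) + ((d-1)/2) z² - 2/(d² z²)`. -/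
def gfun (d : ℕ) (z : ℝ) : ℝ :=
  (2 - (d:ℝ)) / d - Real.log ((d:ℝ) * z^2 / 2) + ((d:ℝ) - 1) / 2 * z^2 - 2 / ((d:ℝ)^2 * z^2)

/-- `z_d(x) = (x - √(x² - 4(d-1))) / ((d-1)√(2d))`. -/
def zfun (d : ℕ) (x : ℝ) : ℝ :=
  (x - Real.sqrt (x^2 - 4*((d:ℝ) - 1))) / (((d:ℝ) - 1) * Real.sqrt (2*(d:ℝ)))

lemma helper (D xd : ℝ) (hD : 3 ≤ D) (hx : 2 * Real.sqrt (D - 1) ≤ xd) (z : ℝ)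
    (hz : z = (xd - Real.sqrt (xd^2 - 4*(D - 1))) / ((D - 1) * Real.sqrt (2*D)))
    (hg : (2 - D) / D - Real.log (D * z^2 / 2) + (D - 1) / 2 * z^2 - 2 / (D^2 * z^2) = 0) :
    ∃ L : ℝ, 0 < L ∧ (D-1)/D ≤ L ∧
      L = Real.log D + Real.log L - 1 + 2/D + (D-1)/(D^2*L) ∧
      (xd * Real.sqrt (2/D))^2 = 2*L + 4*(D-1)/D + 2*(D-1)^2/(D^2*L) := by
  have hD0 : (0:ℝ) < D := by linarith
  have hD1 : (0:ℝ) < D - 1 := by linarith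
  have hxpos : 0 < xd := by
    have h1 : 0 < Real.sqrt (D - 1) := Real.sqrt_pos.mpr hD1
    linarith
  have hx2 : 4*(D-1) ≤ xd^2 := by
    nlinarith [Real.sq_sqrt hD1.le, Real.sqrt_nonneg (D-1)]
  set y := Real.sqrt (xd^2 - 4*(D-1)) with hy_def
  have hy2 : y^2 = xd^2 - 4*(D-1) := Real.sq_sqrt (by linarith)
  have hy0 : 0 ≤ y := Real.sqrt_nonneg _
  have hylt : y < xd := by
    have h : y^2 < xd^2 := by nlinarith
    exact lt_of_pow_lt_pow_left₀ 2 hxpos.le h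
  set a := xd - y with ha_def
  have ha : 0 < a := sub_pos.mpr hylt
  have haxy : a * (xd + y) = 4*(D-1) := by
    have h : a * (xd + y) = xd^2 - y^2 := by rw [ha_def]; ring
    rw [h, hy2]; ring
  have ha2 : a^2 ≤ 4*(D-1) := by nlinarith [mul_nonneg ha.le hy0]
  have hsq : 0 < Real.sqrt (2*D) := Real.sqrt_pos.mpr (by linarith)
  have hz' : z = a / ((D-1) * Real.sqrt (2*D)) := hz
  have hz2 : z^2 = a^2 / ((D-1)^2 * (2*D)) := by
    rw [hz', div_pow, mul_pow, Real.sq_sqrt (by linarith : (0:ℝ) ≤ 2*D)]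
  set L : ℝ := 4*(D-1)^2/(D*a^2) with hLdef
  have hLpos : 0 < L := by rw [hLdef]; positivity
  have hL2 : 2/(D^2*z^2) = L := by rw [hz2, hLdef]; field_simp; ring
  have hLlb : (D-1)/D ≤ L := by
    rw [hLdef, div_le_div_iff₀ hD0 (by positivity)]
    nlinarith [mul_le_mul_of_nonneg_left ha2 hD1.le]
  have h1 : D*z^2/2 = 1/(D*L) := by rw [hz2, hLdef]; field_simp; ring
  have h3 : (D-1)/2*z^2 = (D-1)/(D^2*L) := by rw [hz2, hLdef]; field_simp; ring
  refine ⟨L, hLpos, hLlb, ?_, ?_⟩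
  · rw [h1, h3, hL2] at hg
    rw [one_div, Real.log_inv, Real.log_mul hD0.ne' hLpos.ne'] at hg
    have h4 : (2-D)/D = 2/D - 1 := by field_simp
    linarith [hg, h4]
  · have hyxa : y = xd - a := by rw [ha_def]; ring
    rw [hyxa] at haxy
    have hax : 2*(a*xd) = a^2 + 4*(D-1) := by linear_combination haxy
    have hxd2 : a^2*xd^2 = (a^2/2 + 2*(D-1))^2 := by
      linear_combination ((a*xd + a^2/2 + 2*(D-1))/2) * hax
    have hxd2' : xd^2 = (a^2/2 + 2*(D-1))^2/a^2 := by
      rw [eq_div_iff (pow_ne_zero 2 ha.ne')]; linear_combination hxd2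
    rw [mul_pow, Real.sq_sqrt (div_nonneg (by norm_num) hD0.le), hxd2', hLdef]
    field_simp; ring

lemma bounds (D ℓ L lg : ℝ) (hD : 3 ≤ D) (hℓ : 4 ≤ ℓ) (hLpos : 0 < L)
    (hLlb : (D-1)/D ≤ L)
    (hstar : L = ℓ + Real.log L - 1 + 2/D + (D-1)/(D^2*L))
    (hlg : lg = Real.log ℓ) :
    -(2*(1/(ℓ-1))) ≤ 2*(Real.log L - lg) + 2*(D-1)/(D*L) ∧
    2*(Real.log L - lg) + 2*(D-1)/(D*L) ≤ 4*(lg/ℓ) + 2*(1/(ℓ-1)) := by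
  have hD0 : (0:ℝ) < D := by linarith
  have hD1 : (0:ℝ) < D - 1 := by linarith
  have hℓ0 : (0:ℝ) < ℓ := by linarith
  have hL23 : (2:ℝ)/3 ≤ L := by
    refine le_trans ?_ hLlb
    rw [div_le_div_iff₀ (by norm_num) hD0]; linarith
  have hε1 : (D-1)/(D^2*L) ≤ 1/D := by
    rw [div_le_div_iff₀ (by positivity) hD0]
    have h : D - 1 ≤ D*L := by
      rw [div_le_iff₀ hD0] at hLlb; linarith
    nlinarith
  have hε0 : 0 ≤ (D-1)/(D^2*L) := by positivity
  have hd0 : 0 < 2/D := by positivity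
  have hdub : 2/D ≤ 2/3 := by
    rw [div_le_div_iff₀ hD0 (by norm_num)]; linarith
  have hlogL_lb0 : -(1:ℝ)/2 ≤ Real.log L := by
    have h1 : Real.log (2/3) ≤ Real.log L := Real.log_le_log (by norm_num) hL23
    have h2 : Real.log (3/2) ≤ 1/2 := by
      have := Real.log_le_sub_one_of_pos (by norm_num : (0:ℝ) < 3/2); linarith
    have h3 : Real.log (2/3) = -Real.log (3/2) := by
      rw [show (2:ℝ)/3 = ((3:ℝ)/2)⁻¹ by norm_num, Real.log_inv]
    linarith
  have hLlb1 : ℓ - 3/2 ≤ L := by linarith [hstar]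
  have hL1 : (1:ℝ) ≤ L := by linarith
  have hlogL0 : 0 ≤ Real.log L := Real.log_nonneg hL1
  have hLlb2 : ℓ - 1 ≤ L := by linarith [hstar]
  have hεub : 2/D + (D-1)/(D^2*L) ≤ 1 := by
    have : (1:ℝ)/D ≤ 1/3 := by rw [div_le_div_iff₀ hD0 (by norm_num)]; linarith
    linarith
  have hsqL : Real.log L ≤ 2*Real.sqrt L - 2 := by
    have h := Real.log_le_sub_one_of_pos (Real.sqrt_pos.mpr hLpos)
    rw [Real.log_sqrt hLpos.le] at h; linarith
  have hLL : L - Real.log L ≤ ℓ := by linarith [hstar]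
  have hsqsq : (Real.sqrt L - 1)^2 ≤ ℓ := by
    have hexp : (Real.sqrt L - 1)^2 = (Real.sqrt L)^2 - 2*Real.sqrt L + 1 := by ring
    rw [hexp, Real.sq_sqrt hLpos.le]; linarith
  have hsqle : Real.sqrt L ≤ 1 + Real.sqrt ℓ := by
    have h1 := Real.sqrt_le_sqrt hsqsq
    rw [Real.sqrt_sq_eq_abs] at h1
    linarith [le_abs_self (Real.sqrt L - 1)]
  have hLcrude : L ≤ 4*ℓ := by
    have h1 := pow_le_pow_left₀ (Real.sqrt_nonneg L) hsqle 2
    rw [Real.sq_sqrt hLpos.le] at h1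
    have h2 : (1 + Real.sqrt ℓ)^2 = 1 + 2*Real.sqrt ℓ + (Real.sqrt ℓ)^2 := by ring
    rw [h2, Real.sq_sqrt hℓ0.le] at h1
    nlinarith [sq_nonneg (Real.sqrt ℓ - 1), Real.sq_sqrt hℓ0.le]
  have hlogL_ub : Real.log L ≤ 2*lg := by
    have h1 : Real.log L ≤ Real.log (4*ℓ) := Real.log_le_log hLpos hLcrude
    have h2 : Real.log (4*ℓ) = Real.log 4 + Real.log ℓ := Real.log_mul (by norm_num) hℓ0.ne'
    have h3 : Real.log 4 ≤ Real.log ℓ := Real.log_le_log (by norm_num) (by linarith)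
    rw [hlg]; linarith
  have hLub : L ≤ ℓ + 2*lg := by linarith [hstar]
  have hlgpos : 0 < lg := by
    rw [hlg]
    have h3 : Real.log 4 ≤ Real.log ℓ := Real.log_le_log (by norm_num) (by linarith)
    have h4 : (1:ℝ) ≤ Real.log 4 := by
      rw [Real.le_log_iff_exp_le (by norm_num)]
      have := Real.exp_one_lt_d9
      linarith
    linarith
  have hup : Real.log L - lg ≤ 2*(lg/ℓ) := by
    have hdiv : Real.log L - lg = Real.log (L/ℓ) := by
      rw [hlg, Real.log_div hLpos.ne' hℓ0.ne']
    have h1 := Real.log_le_sub_one_of_pos (div_pos hLpos hℓ0)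
    have h2 : L/ℓ - 1 ≤ 2*(lg/ℓ) := by
      have ha : L/ℓ - 1 = (L-ℓ)/ℓ := by field_simp
      have hb : (L-ℓ)/ℓ ≤ (2*lg)/ℓ := by
        rw [div_le_div_iff₀ hℓ0 hℓ0]; nlinarith
      rw [ha]
      calc (L-ℓ)/ℓ ≤ (2*lg)/ℓ := hb
        _ = 2*(lg/ℓ) := by ring
    linarith
  have hlo : -(1/(ℓ-1)) ≤ Real.log L - lg := by
    have h1 := Real.log_le_sub_one_of_pos (div_pos hℓ0 hLpos)
    rw [Real.log_div hℓ0.ne' hLpos.ne'] at h1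
    have h2 : ℓ/L - 1 = (ℓ - L)/L := by field_simp
    have h3 : (ℓ - L)/L ≤ 1/L := by
      rw [div_le_div_iff₀ hLpos hLpos]; nlinarith
    have h4 : 1/L ≤ 1/(ℓ-1) := by
      apply one_div_le_one_div_of_le (by linarith) hLlb2
    rw [hlg]
    linarith
  have hR0 : 0 ≤ 2*(D-1)/(D*L) := by positivity
  have hRa : 2*(D-1)/(D*L) ≤ 2/L := by
    rw [div_le_div_iff₀ (by positivity) hLpos]; nlinarith
  have hRb : 2/L ≤ 2*(1/(ℓ-1)) := by
    rw [show 2*(1/(ℓ-1)) = 2/(ℓ-1) by ring, div_le_div_iff₀ hLpos (by linarith)]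
    linarith
  constructor
  · linarith
  · linarith

/-- **Asymptotics of the injective norm of a Wigner tensor.** If `x_d ≥ 2√(d-1)` solves
`g_d(z_d(x_d)) = 0` for each `d ≥ 3`, then `μ_d = x_d √(2/d)` satisfies
`μ_d² = 2 log d + 2 log log d + 2 + o(1)` as `d → ∞`. -/
theorem injective_norm_asymptotics
    (x : ℕ → ℝ)
    (hx : ∀ d : ℕ, 3 ≤ d → 2 * Real.sqrt ((d:ℝ) - 1) ≤ x d)
    (hroot : ∀ d : ℕ, 3 ≤ d → gfun d (zfun d (x d)) = 0) :
    Tendsto (fun d : ℕ =>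
        (x d * Real.sqrt (2 / (d:ℝ)))^2
          - (2 * Real.log d + 2 * Real.log (Real.log d) + 2))
      atTop (nhds 0) := by
  have hlog : Tendsto (fun d : ℕ => Real.log d) atTop atTop :=
    Real.tendsto_log_atTop.comp tendsto_natCast_atTop_atTop
  have hinv : Tendsto (fun d : ℕ => 1/(Real.log d - 1)) atTop (nhds 0) := by
    exact ((tendsto_atTop_add_const_right atTop (-1) hlog).inv_tendsto_atTop).congr
      (fun d => by show (Real.log d + -1)⁻¹ = 1/(Real.log d - 1); rw [one_div, sub_eq_add_neg])
  have hloglog : Tendsto (fun d : ℕ => Real.log (Real.log d)/(Real.log d)) atTop (nhds 0) := by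
    have h0 : Tendsto (fun u : ℝ => Real.log u / u) atTop (nhds 0) :=
      Real.isLittleO_log_id_atTop.tendsto_div_nhds_zero
    exact h0.comp hlog
  have hglim : Tendsto (fun d : ℕ => -(2*(1/(Real.log d - 1)))) atTop (nhds 0) := by
    have := (hinv.const_mul (2:ℝ)).neg
    simpa using this
  have hhlim : Tendsto (fun d : ℕ =>
      4*(Real.log (Real.log d)/(Real.log d)) + 2*(1/(Real.log d - 1))) atTop (nhds 0) := by
    have := (hloglog.const_mul (4:ℝ)).add (hinv.const_mul (2:ℝ))
    simpa using this
  -- the key per-d estimate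
  have hkey : ∀ d : ℕ, 55 ≤ d →
      -(2*(1/(Real.log d - 1))) ≤
        (x d * Real.sqrt (2 / (d:ℝ)))^2
          - (2 * Real.log d + 2 * Real.log (Real.log d) + 2) ∧
      (x d * Real.sqrt (2 / (d:ℝ)))^2
          - (2 * Real.log d + 2 * Real.log (Real.log d) + 2) ≤
        4*(Real.log (Real.log d)/(Real.log d)) + 2*(1/(Real.log d - 1)) := by
    intro d hd
    have hd3 : 3 ≤ d := by omega
    have hD : (3:ℝ) ≤ (d:ℝ) := by exact_mod_cast hd3
    obtain ⟨L, hLpos, hLlb, hstar, hmu⟩ :=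
      helper (d:ℝ) (x d) hD (hx d hd3) (zfun d (x d)) rfl
        (by have := hroot d hd3; simpa [gfun] using this)
    have hℓ4 : (4:ℝ) ≤ Real.log d := by
      have h55 : (4:ℝ) ≤ Real.log 55 := by
        rw [Real.le_log_iff_exp_le (by norm_num)]
        have he : Real.exp 4 = (Real.exp 1)^4 := by
          rw [← Real.exp_nat_mul]; norm_num
        have h1 := Real.exp_one_lt_d9
        have h2 : (Real.exp 1)^4 < 2.7182818286^4 := by
          apply pow_lt_pow_left₀ h1 (Real.exp_pos 1).le
          norm_num
        rw [he]
        nlinarith [h2]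
      have : Real.log 55 ≤ Real.log d := by
        apply Real.log_le_log (by norm_num)
        exact_mod_cast (by exact_mod_cast hd : (55:ℕ) ≤ d)
      linarith
    obtain ⟨hb1, hb2⟩ := bounds (d:ℝ) (Real.log d) L (Real.log (Real.log d))
      hD hℓ4 hLpos hLlb hstar rfl
    have hD0 : (0:ℝ) < (d:ℝ) := by linarith
    have hfeq : (x d * Real.sqrt (2 / (d:ℝ)))^2
          - (2 * Real.log d + 2 * Real.log (Real.log d) + 2)
        = 2*(Real.log L - Real.log (Real.log d)) + 2*((d:ℝ)-1)/((d:ℝ)*L) := by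
      rw [hmu]
      have hid : (-2 + 4/(d:ℝ) + 2*((d:ℝ)-1)/((d:ℝ)^2*L)) + 4*((d:ℝ)-1)/(d:ℝ) - 2
          + 2*((d:ℝ)-1)^2/((d:ℝ)^2*L) - 2*((d:ℝ)-1)/((d:ℝ)*L) = 0 := by
        field_simp
        ring
      linear_combination 2*hstar + hid
    rw [hfeq]
    exact ⟨hb1, hb2⟩
  refine tendsto_of_tendsto_of_tendsto_of_le_of_le' hglim hhlim ?_ ?_
  · filter_upwards [eventually_ge_atTop 55] with d hd
    exact (hkey d hd).1
  · filter_upwards [eventually_ge_atTop 55] with d hd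
    exact (hkey d hd).2
end
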